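/- If g(x) = x^2 + Ax + B ∈ ℤ[x] is irreducible over ℚ, then f(x) = g(x^3) = x^6 + A x^3 + B is reducible over ℚ if and only if there exist integers m, n with B = n^3 and A = m^3 - 3mn. -/

import Mathlib

open Polynomial

theorem stmt2 (A B : ℤ)
    (hg : Irreducible (X ^ 2 + C (A : ℚ) * X + C (B : ℚ))) :
    ¬ Irreducible (X ^ 6 + C (A : ℚ) * X ^ 3 + C (B : ℚ)) ↔
      ∃ m n : ℤ, B = n ^ 3 ∧ A = m ^ 3 - 3 * m * n := by
  constructor
  · intro hnot
    -- Step 1: find a monic irreducible factor `p` of `f` with `natDegree p ≤ 3`.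
    have hfdeg : (X ^ 6 + C (A : ℚ) * X ^ 3 + C (B : ℚ)).natDegree = 6 := by compute_degree!
    have hf0 : (X ^ 6 + C (A : ℚ) * X ^ 3 + C (B : ℚ)) ≠ 0 := fun h => by
      rw [h] at hfdeg; simp at hfdeg
    have hfu : ¬ IsUnit (X ^ 6 + C (A : ℚ) * X ^ 3 + C (B : ℚ)) :=
      not_isUnit_of_natDegree_pos _ (by omega)
    rw [irreducible_iff] at hnot
    push_neg at hnot
    obtain ⟨u, v, huv, hu, hv⟩ := hnot hfu
    have hu0 : u ≠ 0 := fun h => hf0 (by rw [huv, h, zero_mul])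
    have hv0 : v ≠ 0 := fun h => hf0 (by rw [huv, h, mul_zero])
    have hdegsum : u.natDegree + v.natDegree = 6 := by
      rw [← hfdeg, huv, natDegree_mul hu0 hv0]
    have hu1 : 1 ≤ u.natDegree := by
      by_contra h
      push_neg at h
      rw [Nat.lt_one_iff] at h
      have heq := eq_C_of_natDegree_eq_zero h
      rw [heq] at hu hu0
      exact hu (isUnit_C.mpr (isUnit_iff_ne_zero.mpr (fun h => hu0 (by rw [h, map_zero]))))
    have hv1 : 1 ≤ v.natDegree := by
      by_contra h
      push_neg at h
      rw [Nat.lt_one_iff] at h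
      have heq := eq_C_of_natDegree_eq_zero h
      rw [heq] at hv hv0
      exact hv (isUnit_C.mpr (isUnit_iff_ne_zero.mpr (fun h => hv0 (by rw [h, map_zero]))))
    obtain ⟨w, hwu, hw0, hwd, hwdvd⟩ :
        ∃ w : ℚ[X], ¬ IsUnit w ∧ w ≠ 0 ∧ w.natDegree ≤ 3 ∧
          w ∣ (X ^ 6 + C (A : ℚ) * X ^ 3 + C (B : ℚ)) := by
      rcases le_or_gt u.natDegree 3 with h | h
      · exact ⟨u, hu, hu0, h, ⟨v, huv⟩⟩
      · exact ⟨v, hv, hv0, by omega, ⟨u, by rw [huv, mul_comm]⟩⟩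
    obtain ⟨p, hpm, hpi, hpdvd⟩ := w.exists_monic_irreducible_factor hwu
    have hpd3 : p.natDegree ≤ 3 := (natDegree_le_of_dvd hpdvd hw0).trans hwd
    have hpd1 : 1 ≤ p.natDegree := by
      by_contra h
      push_neg at h
      exact hpi.not_isUnit (by
        rw [Nat.lt_one_iff, hpm.natDegree_eq_zero] at h
        rw [h]; exact isUnit_one)
    have hpf : p ∣ (X ^ 6 + C (A : ℚ) * X ^ 3 + C (B : ℚ)) := hpdvd.trans hwdvd
    -- Step 2: `natDegree p = 2` via the field `AdjoinRoot p`.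
    have hpd : p.natDegree = 2 := by
      haveI : Fact (Irreducible p) := ⟨hpi⟩
      have hp0 : p ≠ 0 := hpi.ne_zero
      let K := AdjoinRoot p
      let pb : PowerBasis ℚ K := AdjoinRoot.powerBasis hp0
      haveI : FiniteDimensional ℚ K := pb.finite
      have hfr : Module.finrank ℚ K = p.natDegree := by
        rw [pb.finrank]; rfl
      set β : K := AdjoinRoot.root p with hβ
      have hfroot : aeval β (X ^ 6 + C (A : ℚ) * X ^ 3 + C (B : ℚ)) = 0 := by
        exact (AdjoinRoot.aeval_eq _).trans (AdjoinRoot.mk_eq_zero.mpr hpf)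
      simp only [map_add, map_mul, map_pow, aeval_X, aeval_C] at hfroot
      set γ : K := β ^ 3 with hγ
      have hgroot : aeval γ (X ^ 2 + C (A : ℚ) * X + C (B : ℚ)) = 0 := by
        simp only [map_add, map_mul, map_pow, aeval_X, aeval_C, hγ]
        rw [← hfroot]; ring
      have hgmonic : (X ^ 2 + C (A : ℚ) * X + C (B : ℚ)).Monic := by
        rw [add_assoc]
        exact monic_X_pow_add (lt_of_le_of_lt degree_linear_le (by norm_num))
      have hgdeg : (X ^ 2 + C (A : ℚ) * X + C (B : ℚ)).natDegree = 2 := by compute_degree!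
      have hint : IsIntegral ℚ γ := IsIntegral.of_finite ℚ γ
      have hmp : minpoly ℚ γ = (X ^ 2 + C (A : ℚ) * X + C (B : ℚ)) :=
        (minpoly.eq_of_irreducible_of_monic hg hgroot hgmonic).symm
      have hdvd := minpoly.degree_dvd hint
      rw [hmp, hgdeg, hfr] at hdvd
      omega
    -- Step 3: extract the coefficients of `p` and compute.
    obtain ⟨a, b, hp_eq⟩ : ∃ a b : ℚ, p = X ^ 2 + C a * X + C b := by
      refine ⟨p.coeff 1, p.coeff 0, ?_⟩
      ext k
      match k with
      | 0 => simp
      | 1 => simp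
      | 2 =>
        have h2 : p.coeff 2 = 1 := by
          have := hpm.coeff_natDegree
          rwa [hpd] at this
        simp [h2, coeff_X_pow]
      | (k+3) =>
        have h1 : p.coeff (k+3) = 0 := coeff_eq_zero_of_natDegree_lt (by omega)
        have h2 : (C (p.coeff 1) * X).coeff (k+3) = 0 := by
          rw [coeff_C_mul, coeff_X]; simp
        rw [h1, coeff_add, coeff_add, coeff_X_pow, h2, coeff_C]
        simp
    have key : (X ^ 6 + C (A : ℚ) * X ^ 3 + C (B : ℚ)) =
        p * (X ^ 4 - C a * X ^ 3 + (C a ^ 2 - C b) * X ^ 2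
          + (C (A:ℚ) + 2 * C a * C b - C a ^ 3) * X
          + (C a ^ 4 - 3 * C a ^ 2 * C b + C b ^ 2 - C a * C (A:ℚ)))
        + (C ((a^2 - b) * ((A:ℚ) - a^3 + 3*a*b)) * X
          + C ((B:ℚ) + (A:ℚ)*a*b - a^4*b + 3*a^2*b^2 - b^3)) := by
      rw [hp_eq]
      simp only [map_sub, map_mul, map_pow, map_add, map_ofNat]
      ring
    have hrd : p ∣ (C ((a^2 - b) * ((A:ℚ) - a^3 + 3*a*b)) * X
          + C ((B:ℚ) + (A:ℚ)*a*b - a^4*b + 3*a^2*b^2 - b^3)) := by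
      have h1 : p ∣ p * (X ^ 4 - C a * X ^ 3 + (C a ^ 2 - C b) * X ^ 2
          + (C (A:ℚ) + 2 * C a * C b - C a ^ 3) * X
          + (C a ^ 4 - 3 * C a ^ 2 * C b + C b ^ 2 - C a * C (A:ℚ))) := Dvd.intro _ rfl
      have h2 := dvd_sub hpf h1
      rw [key] at h2
      simpa using h2
    have hpdeg : p.degree = 2 := by
      rw [degree_eq_natDegree hpi.ne_zero, hpd]; rfl
    have hr0 : (C ((a^2 - b) * ((A:ℚ) - a^3 + 3*a*b)) * X
          + C ((B:ℚ) + (A:ℚ)*a*b - a^4*b + 3*a^2*b^2 - b^3) : ℚ[X]) = 0 := by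
      apply eq_zero_of_dvd_of_degree_lt hrd
      rw [hpdeg]
      exact lt_of_le_of_lt degree_linear_le (by norm_num)
    have hR1 : (a^2 - b) * ((A:ℚ) - a^3 + 3*a*b) = 0 := by
      have := congrArg (fun q : ℚ[X] => q.coeff 1) hr0
      simp only [coeff_add, coeff_C_mul, coeff_X_one, coeff_C, mul_one, coeff_zero] at this
      simpa using this
    have hR0 : (B:ℚ) + (A:ℚ)*a*b - a^4*b + 3*a^2*b^2 - b^3 = 0 := by
      have := congrArg (fun q : ℚ[X] => q.coeff 0) hr0
      simp only [coeff_add, coeff_C_mul, coeff_X_zero, coeff_C, mul_zero, zero_add,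
        coeff_zero, if_pos] at this
      simpa using this
    rcases mul_eq_zero.mp hR1 with h | h
    · -- `b = a ^ 2` : contradiction, `g` would have the rational root `a ^ 3`.
      exfalso
      have hba : b = a^2 := by linarith
      rw [hba] at hR0
      have hroot : IsRoot (X ^ 2 + C (A : ℚ) * X + C (B : ℚ)) (a^3) := by
        simp only [IsRoot, eval_add, eval_mul, eval_pow, eval_X, eval_C]
        linear_combination hR0
      have hdvd : (X - C (a^3)) ∣ (X ^ 2 + C (A : ℚ) * X + C (B : ℚ)) :=
        dvd_iff_isRoot.mpr hroot
      obtain ⟨h2, hh⟩ := hdvd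
      rcases hg.isUnit_or_isUnit hh with hu | hu
      · exact (not_isUnit_of_natDegree_pos _ (by rw [natDegree_X_sub_C]; omega)) hu
      · have hgdeg : (X ^ 2 + C (A : ℚ) * X + C (B : ℚ)).natDegree = 2 := by compute_degree!
        have h20 : h2 ≠ 0 := by
          intro h0
          rw [h0, mul_zero] at hh
          rw [hh] at hgdeg
          simp at hgdeg
        have hsum : (X - C (a^3)).natDegree + h2.natDegree = 2 := by
          rw [← natDegree_mul (X_sub_C_ne_zero _) h20, ← hh, hgdeg]
        rw [natDegree_X_sub_C] at hsum
        exact (not_isUnit_of_natDegree_pos h2 (by omega)) hu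
    · -- `A = a ^ 3 - 3 a b`, hence `B = b ^ 3`, and `a`, `b` are integers.
      have hA : (A:ℚ) = a^3 - 3*a*b := by linarith
      have hB : (B:ℚ) = b^3 := by linear_combination hR0 + (-(a*b)) * hA
      obtain ⟨n, hn⟩ : ∃ n : ℤ, algebraMap ℤ ℚ n = b := by
        rw [← IsIntegrallyClosed.isIntegral_iff]
        refine ⟨X ^ 3 - C B, monic_X_pow_sub_C B (by norm_num), ?_⟩
        simp only [eval₂_sub, eval₂_pow, eval₂_X, eval₂_C]
        have : (algebraMap ℤ ℚ) B = (B:ℚ) := rfl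
        rw [this, hB]; ring
      obtain ⟨m, hm⟩ : ∃ m : ℤ, algebraMap ℤ ℚ m = a := by
        rw [← IsIntegrallyClosed.isIntegral_iff]
        refine ⟨X ^ 3 - (C (3 * n) * X + C A),
          monic_X_pow_sub (n := 3) (lt_of_le_of_lt degree_linear_le (by norm_num)), ?_⟩
        simp only [eval₂_sub, eval₂_pow, eval₂_X, eval₂_C, eval₂_add, eval₂_mul]
        have h1 : (algebraMap ℤ ℚ) (3 * n) = 3 * (n:ℚ) := by norm_num [map_mul]
        have h2 : (algebraMap ℤ ℚ) A = (A:ℚ) := rfl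
        have hnb : ((n:ℚ)) = b := hn
        rw [h1, h2, hnb, hA]; ring
      refine ⟨m, n, ?_, ?_⟩
      · have : (B:ℚ) = (n:ℚ)^3 := by rw [hB, ← hn]; norm_num
        exact_mod_cast this
      · have hma : ((m:ℚ)) = a := hm
        have : (A:ℚ) = (m:ℚ)^3 - 3*(m:ℚ)*(n:ℚ) := by
          rw [hma, show ((n:ℚ)) = b from hn, hA]
        exact_mod_cast this
  · rintro ⟨m, n, rfl, rfl⟩ hirr
    have hc1 : ((m^3-3*m*n : ℤ) : ℚ) = (m:ℚ)^3 - 3*(m:ℚ)*(n:ℚ) := by push_cast; ring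
    have hc2 : ((n^3 : ℤ) : ℚ) = (n:ℚ)^3 := by push_cast; ring
    have key : (X ^ 6 + C ((m^3-3*m*n : ℤ) : ℚ) * X ^ 3 + C ((n^3 : ℤ) : ℚ)) =
        (X ^ 2 + C (m:ℚ) * X + C (n:ℚ)) *
        (X ^ 4 - C (m:ℚ) * X ^ 3 + (C (m:ℚ)^2 - C (n:ℚ)) * X ^ 2
          - C (m:ℚ) * C (n:ℚ) * X + C (n:ℚ)^2) := by
      rw [hc1, hc2]
      simp only [map_sub, map_mul, map_pow, map_add, map_ofNat]
      ring
    rcases hirr.isUnit_or_isUnit key with h | h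
    · have hd : (X ^ 2 + C (m:ℚ) * X + C (n:ℚ)).natDegree = 2 := by compute_degree!
      exact not_isUnit_of_natDegree_pos _ (by omega) h
    · have hd : (X ^ 4 - C (m:ℚ) * X ^ 3 + (C (m:ℚ)^2 - C (n:ℚ)) * X ^ 2
          - C (m:ℚ) * C (n:ℚ) * X + C (n:ℚ)^2).natDegree = 4 := by compute_degree!
      exact not_isUnit_of_natDegree_pos _ (by omega) h
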